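/- Let f(x) = log((x-1)/(x+1)) on the domain x > 1. Then the quotient g(x) = f(x)/f(x^2) is strictly monotonically increasing on (1, ∞). -/

import Mathlib

open Real Set

/-- Key inequality from strict convexity of `t ↦ t * log t`. -/
lemma key_ineq {x : ℝ} (hx : 1 < x) :
    (x ^ 2 + 1) * Real.log (x ^ 2 + 1)
      < (x - 1) ^ 2 * Real.log (x - 1) + (x + 1) ^ 2 * Real.log (x + 1) := by
  have h1 : (0:ℝ) < x - 1 := by linarith
  have h2 : (0:ℝ) < x + 1 := by linarith
  have ha : ((x - 1) ^ 2 : ℝ) ∈ Set.Ici (0:ℝ) := Set.mem_Ici.2 (by positivity)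
  have hb : ((x + 1) ^ 2 : ℝ) ∈ Set.Ici (0:ℝ) := Set.mem_Ici.2 (by positivity)
  have hab : ((x - 1) ^ 2 : ℝ) ≠ (x + 1) ^ 2 := by nlinarith
  have h := Real.strictConvexOn_mul_log.2 ha hb hab (by norm_num : (0:ℝ) < 1/2)
    (by norm_num : (0:ℝ) < 1/2) (by norm_num)
  have hm : (1/2 : ℝ) • ((x - 1) ^ 2) + (1/2 : ℝ) • ((x + 1) ^ 2) = x ^ 2 + 1 := by
    simp [smul_eq_mul]; ring
  rw [hm] at h
  have la : Real.log ((x - 1) ^ 2) = 2 * Real.log (x - 1) := by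
    rw [Real.log_pow]; push_cast; ring
  have lb : Real.log ((x + 1) ^ 2) = 2 * Real.log (x + 1) := by
    rw [Real.log_pow]; push_cast; ring
  simp only [smul_eq_mul, la, lb] at h
  nlinarith [h]

theorem strictMonoOn_quotient_log_ratio :
    StrictMonoOn
      (fun x : ℝ =>
        Real.log ((x - 1) / (x + 1)) / Real.log ((x ^ 2 - 1) / (x ^ 2 + 1)))
      (Set.Ioi (1 : ℝ)) := by
  set G : ℝ → ℝ := fun x =>
    (Real.log (x - 1) - Real.log (x + 1)) /
      (Real.log (x ^ 2 - 1) - Real.log (x ^ 2 + 1)) with hG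
  have hEq : Set.EqOn
      (fun x : ℝ =>
        Real.log ((x - 1) / (x + 1)) / Real.log ((x ^ 2 - 1) / (x ^ 2 + 1))) G
      (Set.Ioi (1 : ℝ)) := by
    intro x hx
    have hx1 : (1:ℝ) < x := hx
    have h1 : (0:ℝ) < x - 1 := by linarith
    have h2 : (0:ℝ) < x + 1 := by linarith
    have h3 : (0:ℝ) < x ^ 2 - 1 := by nlinarith
    have h4 : (0:ℝ) < x ^ 2 + 1 := by positivity
    simp only [hG]
    rw [Real.log_div h1.ne' h2.ne', Real.log_div h3.ne' h4.ne']
  -- derivative data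
  have hDeriv : ∀ x ∈ Set.Ioi (1:ℝ), HasDerivAt G
      (((1/(x-1) - 1/(x+1)) * (Real.log (x ^ 2 - 1) - Real.log (x ^ 2 + 1))
        - (Real.log (x - 1) - Real.log (x + 1)) * (2*x/(x^2-1) - 2*x/(x^2+1)))
        / (Real.log (x ^ 2 - 1) - Real.log (x ^ 2 + 1)) ^ 2) x := by
    intro x hx
    have hx1 : (1:ℝ) < x := hx
    have h1 : (0:ℝ) < x - 1 := by linarith
    have h2 : (0:ℝ) < x + 1 := by linarith
    have h3 : (0:ℝ) < x ^ 2 - 1 := by nlinarith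
    have h4 : (0:ℝ) < x ^ 2 + 1 := by positivity
    have hB : Real.log (x ^ 2 - 1) - Real.log (x ^ 2 + 1) ≠ 0 := by
      have : Real.log (x ^ 2 - 1) < Real.log (x ^ 2 + 1) :=
        Real.log_lt_log h3 (by linarith)
      linarith
    have d1 : HasDerivAt (fun x : ℝ => Real.log (x - 1)) (1/(x-1)) x := by
      have := (Real.hasDerivAt_log h1.ne').comp x ((hasDerivAt_id x).sub_const 1)
      simpa [one_div, Function.comp_def] using this
    have d2 : HasDerivAt (fun x : ℝ => Real.log (x + 1)) (1/(x+1)) x := by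
      have := (Real.hasDerivAt_log h2.ne').comp x ((hasDerivAt_id x).add_const 1)
      simpa [one_div, Function.comp_def] using this
    have dsq : HasDerivAt (fun x : ℝ => x ^ 2) (2*x) x := by
      simpa using (hasDerivAt_pow 2 x)
    have d3 : HasDerivAt (fun x : ℝ => Real.log (x ^ 2 - 1)) (2*x/(x^2-1)) x := by
      have := (Real.hasDerivAt_log h3.ne').comp x (dsq.sub_const 1)
      simpa [div_eq_inv_mul, mul_comm, Function.comp_def] using this
    have d4 : HasDerivAt (fun x : ℝ => Real.log (x ^ 2 + 1)) (2*x/(x^2+1)) x := by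
      have := (Real.hasDerivAt_log h4.ne').comp x (dsq.add_const 1)
      simpa [div_eq_inv_mul, mul_comm, Function.comp_def] using this
    exact ((d1.sub d2).div (d3.sub d4) hB)
  have hCont : ContinuousOn G (Set.Ioi (1:ℝ)) :=
    fun x hx => ((hDeriv x hx).continuousAt).continuousWithinAt
  have hMono : StrictMonoOn G (Set.Ioi (1:ℝ)) := by
    apply strictMonoOn_of_deriv_pos (convex_Ioi 1) hCont
    intro x hx
    rw [interior_Ioi] at hx
    have hx1 : (1:ℝ) < x := hx
    have h1 : (0:ℝ) < x - 1 := by linarith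
    have h2 : (0:ℝ) < x + 1 := by linarith
    have h3 : (0:ℝ) < x ^ 2 - 1 := by nlinarith
    have h4 : (0:ℝ) < x ^ 2 + 1 := by positivity
    have hBlt : Real.log (x ^ 2 - 1) - Real.log (x ^ 2 + 1) < 0 := by
      have : Real.log (x ^ 2 - 1) < Real.log (x ^ 2 + 1) :=
        Real.log_lt_log h3 (by linarith)
      linarith
    rw [(hDeriv x hx).deriv]
    apply div_pos _ (pow_pos (neg_pos.2 hBlt) 2 |>.trans_eq (by ring))
    -- numerator positivity
    have hsplit : Real.log (x ^ 2 - 1) = Real.log (x - 1) + Real.log (x + 1) := by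
      rw [show x ^ 2 - 1 = (x - 1) * (x + 1) by ring, Real.log_mul h1.ne' h2.ne']
    have hkey := key_ineq hx1
    set L1 := Real.log (x - 1)
    set L2 := Real.log (x + 1)
    set L3 := Real.log (x ^ 2 + 1)
    rw [hsplit]
    have e1 : (1/(x-1) - 1/(x+1)) = 2 / (x^2-1) := by
      field_simp; ring
    have e2 : (2*x/(x^2-1) - 2*x/(x^2+1)) = 4*x / ((x^2-1)*(x^2+1)) := by
      field_simp; ring
    rw [e1, e2]
    have e3 : 2 / (x^2-1) * (L1 + L2 - L3) - (L1 - L2) * (4*x/((x^2-1)*(x^2+1)))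
        = (2*(x^2+1)*(L1 + L2 - L3) - 4*x*(L1 - L2)) / ((x^2-1)*(x^2+1)) := by
      field_simp
    rw [e3]
    apply div_pos _ (by positivity)
    nlinarith [hkey]
  exact hMono.congr hEq.symm
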